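/- Let f : (ℝ \ {0}) × ℝ → ℂ be continuous and satisfy the compatibility conditions f(x,u) = f(−x,u) = f(x,−u) = f(−x,−u), and suppose for some λ ∈ ℂ it satisfies f(xy, xv+u) + f(xy, xv−u) = 2f(x,u)|y|^λ + 2f(y,v)|x|^λ for all nonzero reals x, y and all reals u, v (where |x|^λ = exp(λ log|x|)). Then there exists c ∈ ℂ such that f(x,u) = c·|x|^λ·ln|x| for all x ≠ 0 and all u. -/
import Mathlib


/-- `|x|^λ = exp(λ log |x|)` for `x ≠ 0`. -/
noncomputable def absPow (l : ℂ) (x : ℝ) : ℂ := Complex.exp (l * Real.log |x|)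

lemma absPow_one (l : ℂ) : absPow l 1 = 1 := by simp [absPow]

lemma absPow_ne_zero (l : ℂ) (x : ℝ) : absPow l x ≠ 0 := Complex.exp_ne_zero _

lemma absPow_exp (l : ℂ) (t : ℝ) : absPow l (Real.exp t) = Complex.exp (l * t) := by
  rw [absPow, abs_of_pos (Real.exp_pos t), Real.log_exp]

lemma absPow_mul (l : ℂ) {x y : ℝ} (hx : x ≠ 0) (hy : y ≠ 0) :
    absPow l (x * y) = absPow l x * absPow l y := by
  rw [absPow, absPow, absPow, abs_mul, Real.log_mul (abs_ne_zero.2 hx) (abs_ne_zero.2 hy),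
    ← Complex.exp_add]
  congr 1
  push_cast
  ring

theorem sine_on_double_coset_hypergroup (l : ℂ) (f : ℝ → ℝ → ℂ)
    (hcont : ContinuousOn (fun p : ℝ × ℝ => f p.1 p.2) {p : ℝ × ℝ | p.1 ≠ 0})
    (hcompat : ∀ x : ℝ, x ≠ 0 → ∀ u : ℝ,
      f x u = f (-x) u ∧ f x u = f x (-u) ∧ f x u = f (-x) (-u))
    (heq : ∀ x y : ℝ, x ≠ 0 → y ≠ 0 → ∀ u v : ℝ,
      f (x * y) (x * v + u) + f (x * y) (x * v - u) =
        2 * f x u * absPow l y + 2 * f y v * absPow l x) :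
    ∃ c : ℂ, ∀ x : ℝ, x ≠ 0 → ∀ u : ℝ, f x u = c * absPow l x * Real.log |x| := by
  have hA1 : absPow l 1 = 1 := absPow_one l
  -- f 1 0 = 0
  have h10 : f 1 0 = 0 := by
    have h := heq 1 1 one_ne_zero one_ne_zero 0 0
    simp only [one_mul, mul_zero, zero_add, sub_zero, hA1, mul_one, add_zero] at h
    linear_combination -h/2
  -- evenness in u
  have heven : ∀ y : ℝ, y ≠ 0 → ∀ u : ℝ, f y (-u) = f y u := fun y hy u =>
    ((hcompat y hy u).2.1).symm
  -- structure: f y u = f y 0 + f 1 u * absPow l y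
  have hstruct : ∀ y : ℝ, y ≠ 0 → ∀ u : ℝ, f y u = f y 0 + f 1 u * absPow l y := by
    intro y hy u
    have h := heq 1 y one_ne_zero hy u 0
    simp only [one_mul, mul_zero, zero_add, zero_sub, hA1, mul_one] at h
    rw [heven y hy u] at h
    linear_combination h / 2
  -- multiplicativity at u = 0
  have hmult : ∀ x y : ℝ, x ≠ 0 → y ≠ 0 →
      f (x * y) 0 = f x 0 * absPow l y + f y 0 * absPow l x := by
    intro x y hx hy
    have h := heq x y hx hy 0 0
    simp only [mul_zero, add_zero, sub_zero] at h
    linear_combination h / 2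
  -- scaling invariance of g = f 1 ·
  have hg_scale : ∀ x : ℝ, x ≠ 0 → ∀ v : ℝ, f 1 (x * v) = f 1 v := by
    intro x hx v
    have h := heq x 1 hx one_ne_zero 0 v
    simp only [mul_one, add_zero, sub_zero, hA1] at h
    have h2 := hstruct x hx (x * v)
    rw [h2] at h
    have : f 1 (x * v) * absPow l x = f 1 v * absPow l x := by linear_combination h / 2
    exact mul_right_cancel₀ (absPow_ne_zero l x) this
  -- continuity of g
  have gcont : Continuous fun u : ℝ => f 1 u := by
    have : Continuous ((fun p : ℝ × ℝ => f p.1 p.2) ∘ fun u : ℝ => ((1 : ℝ), u)) :=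
      hcont.comp_continuous (continuous_const.prodMk continuous_id)
        (fun u => by simp)
    exact this
  -- f 1 1 = 0
  have g1 : f 1 1 = 0 := by
    have hpt : Filter.Tendsto (fun u : ℝ => f 1 u) (nhdsWithin 0 {(0 : ℝ)}ᶜ) (nhds (f 1 0)) :=
      (gcont.tendsto 0).mono_left nhdsWithin_le_nhds
    have heq' : (fun u : ℝ => f 1 u) =ᶠ[nhdsWithin 0 {(0 : ℝ)}ᶜ] fun _ => f 1 1 := by
      filter_upwards [self_mem_nhdsWithin] with u hu
      have : f 1 (u * 1) = f 1 1 := hg_scale u hu 1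
      simpa using this
    have hlim : Filter.Tendsto (fun _ : ℝ => f 1 1) (nhdsWithin 0 {(0 : ℝ)}ᶜ) (nhds (f 1 0)) :=
      hpt.congr' heq'
    have := tendsto_nhds_unique hlim tendsto_const_nhds
    rw [h10] at this
    exact this.symm
  -- g ≡ 0
  have gzero : ∀ u : ℝ, f 1 u = 0 := by
    intro u
    rcases eq_or_ne u 0 with rfl | hu
    · exact h10
    · have := hg_scale u hu 1
      rw [mul_one] at this
      rw [this, g1]
  -- f is independent of the second variable
  have hconst : ∀ y : ℝ, y ≠ 0 → ∀ u : ℝ, f y u = f y 0 := by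
    intro y hy u
    rw [hstruct y hy u, gzero u, zero_mul, add_zero]
  -- Cauchy's equation for F t = f (exp t) 0 * exp (-(l t))
  set F : ℝ → ℂ := fun t => f (Real.exp t) 0 * Complex.exp (-(l * t)) with hF
  have Fadd : ∀ s t : ℝ, F (s + t) = F s + F t := by
    intro s t
    have h := hmult (Real.exp s) (Real.exp t) (Real.exp_pos s).ne' (Real.exp_pos t).ne'
    simp only [hF]
    rw [Real.exp_add, h, absPow_exp, absPow_exp]
    have e1 : Complex.exp (-(l * ((s : ℂ) + t))) =
        Complex.exp (-(l * s)) * Complex.exp (-(l * t)) := by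
      rw [← Complex.exp_add]; ring_nf
    push_cast
    rw [e1]
    have e2 : Complex.exp (l * t) * Complex.exp (-(l * t)) = 1 := by
      rw [← Complex.exp_add]; simp
    have e3 : Complex.exp (l * s) * Complex.exp (-(l * s)) = 1 := by
      rw [← Complex.exp_add]; simp
    calc (f (Real.exp s) 0 * Complex.exp (l * t) + f (Real.exp t) 0 * Complex.exp (l * s)) *
            (Complex.exp (-(l * s)) * Complex.exp (-(l * t)))
        = f (Real.exp s) 0 * Complex.exp (-(l * s)) *
            (Complex.exp (l * t) * Complex.exp (-(l * t))) +
          f (Real.exp t) 0 * Complex.exp (-(l * t)) *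
            (Complex.exp (l * s) * Complex.exp (-(l * s))) := by ring
      _ = f (Real.exp s) 0 * Complex.exp (-(l * s)) +
          f (Real.exp t) 0 * Complex.exp (-(l * t)) := by rw [e2, e3]; ring
  have Fcont : Continuous F := by
    have h1 : Continuous fun t : ℝ => f (Real.exp t) 0 := by
      have : Continuous ((fun p : ℝ × ℝ => f p.1 p.2) ∘ fun t : ℝ => (Real.exp t, (0 : ℝ))) :=
        hcont.comp_continuous (Real.continuous_exp.prodMk continuous_const)
          (fun t => (Real.exp_pos t).ne')
      exact this
    have h2 : Continuous fun t : ℝ => Complex.exp (-(l * t)) := by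
      exact Complex.continuous_exp.comp ((continuous_const.mul Complex.continuous_ofReal).neg)
    exact h1.mul h2
  -- F is linear
  let Φ : ℝ →+ ℂ := AddMonoidHom.mk' F Fadd
  have hlin : ∀ t : ℝ, F t = (t : ℂ) * F 1 := by
    intro t
    have := map_real_smul Φ Fcont t 1
    simpa [Φ, Complex.real_smul] using this
  refine ⟨F 1, fun x hx u => ?_⟩
  rw [hconst x hx u]
  -- reduce to |x|
  have habs : f x 0 = f |x| 0 := by
    rcases lt_or_gt_of_ne hx with hneg | hpos
    · rw [abs_of_neg hneg]
      exact (hcompat x hx 0).1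
    · rw [abs_of_pos hpos]
  set t := Real.log |x| with ht
  have hxt : |x| = Real.exp t := (Real.exp_log (abs_pos.2 hx)).symm
  have hFt : F t = f (Real.exp t) 0 * Complex.exp (-(l * t)) := rfl
  have hAx : absPow l x = Complex.exp (l * t) := rfl
  have : f (Real.exp t) 0 = F t * Complex.exp (l * t) := by
    rw [hFt, mul_assoc, ← Complex.exp_add]
    simp
  rw [habs, hxt, this, hlin t, hAx]
  ring
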